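/- Let f(x,y) be a continuous real-valued function of two real variables such that: (1) f has a partial derivative in x at (x₀,y₀) which vanishes there; (2) f has a locally bounded, continuous second partial derivative in x at all points (x,y); (3) the mixed partial derivative ∂_y∂_x f exists and is nonzero at (x₀,y₀); (4) y ↦ f(x₀,y) is constant. Then there exists r > 0 such that for every y with 0 < |y - y₀| < r there exists x* with f(x*, y) < f(x₀, y₀). -/

import Mathlib

/-- If a function has a nonzero derivative at a point, it takes a smaller value somewhere. -/
lemma aux_deriv_ne_zero_exists_lt (g : ℝ → ℝ) (d x₀ : ℝ)
    (h : HasDerivAt g d x₀) (hd : d ≠ 0) : ∃ x, g x < g x₀ := by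
  have hslope := hasDerivAt_iff_tendsto_slope.mp h
  rcases lt_or_gt_of_ne hd with hneg | hpos
  · have h1 : Filter.Tendsto (slope g x₀) (nhdsWithin x₀ (Set.Ioi x₀)) (nhds d) :=
      hslope.mono_left (nhdsWithin_mono _ (by intro x hx; exact ne_of_gt hx))
    have h2 : ∀ᶠ x in nhdsWithin x₀ (Set.Ioi x₀), slope g x₀ x < 0 :=
      h1.eventually_lt_const hneg
    obtain ⟨x, hx, hxm⟩ := (h2.and self_mem_nhdsWithin).exists
    refine ⟨x, ?_⟩
    rw [slope_def_field, div_neg_iff] at hx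
    rcases hx with ⟨h3, h4⟩ | ⟨h3, h4⟩
    · linarith [hxm]
    · linarith
  · have h1 : Filter.Tendsto (slope g x₀) (nhdsWithin x₀ (Set.Iio x₀)) (nhds d) :=
      hslope.mono_left (nhdsWithin_mono _ (by intro x hx; exact ne_of_lt hx))
    have h2 : ∀ᶠ x in nhdsWithin x₀ (Set.Iio x₀), 0 < slope g x₀ x :=
      h1.eventually_const_lt hpos
    obtain ⟨x, hx, hxm⟩ := (h2.and self_mem_nhdsWithin).exists
    refine ⟨x, ?_⟩
    rw [slope_def_field, div_pos_iff] at hx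
    rcases hx with ⟨h3, h4⟩ | ⟨h3, h4⟩
    · linarith [hxm]
    · linarith

theorem statement0 (f : ℝ × ℝ → ℝ) (x₀ y₀ : ℝ)
    (fx fxx : ℝ → ℝ → ℝ) (m : ℝ)
    (hf : Continuous f)
    (hfx : ∀ x y : ℝ, HasDerivAt (fun x' => f (x', y)) (fx x y) x)
    (hfx0 : fx x₀ y₀ = 0)
    (hfxx : ∀ x y : ℝ, HasDerivAt (fun x' => fx x' y) (fxx x y) x)
    (hfxx_cont : Continuous fun p : ℝ × ℝ => fxx p.1 p.2)
    (hmix : HasDerivAt (fun y => fx x₀ y) m y₀)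
    (hm : m ≠ 0)
    (hconst : ∀ y : ℝ, f (x₀, y) = f (x₀, y₀)) :
    ∃ r > 0, ∀ y : ℝ, 0 < |y - y₀| → |y - y₀| < r →
      ∃ x : ℝ, f (x, y) < f (x₀, y₀) := by
  -- the slope of y ↦ fx x₀ y tends to m ≠ 0, hence fx x₀ y ≠ 0 for y near but ≠ y₀
  have hslope := hasDerivAt_iff_tendsto_slope.mp hmix
  have hne : ∀ᶠ y in nhdsWithin y₀ {y₀}ᶜ, slope (fun y => fx x₀ y) y₀ y ≠ 0 :=
    hslope.eventually_ne hm
  rw [eventually_nhdsWithin_iff] at hne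
  rw [Metric.eventually_nhds_iff] at hne
  obtain ⟨ε, hε, hball⟩ := hne
  refine ⟨ε, hε, fun y hy1 hy2 => ?_⟩
  have hyne : y ≠ y₀ := by
    intro h; rw [h] at hy1; simp at hy1
  have hdist : dist y y₀ < ε := by rwa [Real.dist_eq]
  have hs := hball hdist hyne
  rw [slope_def_field, hfx0, sub_zero] at hs
  have hfxy : fx x₀ y ≠ 0 := by
    intro h; rw [h] at hs; simp at hs
  obtain ⟨x, hx⟩ := aux_deriv_ne_zero_exists_lt (fun x' => f (x', y)) (fx x₀ y) x₀ (hfx x₀ y) hfxy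
  exact ⟨x, by rwa [hconst y] at hx⟩
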